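/- Let K be a bounded linear operator between Hilbert spaces with ‖K‖ < 1. Then the operator X := K (I - K*K)^{-1/2} satisfies ‖X‖ = ‖K‖ / √(1 - ‖K‖²). -/

import Mathlib

set_option synthInstance.maxHeartbeats 1000000
set_option maxHeartbeats 1000000

open ContinuousLinearMap in
theorem stmt7 {H₀ H₁ : Type*}
    [NormedAddCommGroup H₀] [InnerProductSpace ℂ H₀] [CompleteSpace H₀]
    [NormedAddCommGroup H₁] [InnerProductSpace ℂ H₁] [CompleteSpace H₁]
    (K : H₀ →L[ℂ] H₁) (hK : ‖K‖ < 1) :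
    ‖K.comp (Ring.inverse (CFC.sqrt (1 - (adjoint K).comp K)))‖ =
      ‖K‖ / Real.sqrt (1 - ‖K‖ ^ 2) := by
  rcases subsingleton_or_nontrivial H₀ with hsub | hnt
  · have hK0 : K = 0 := by ext x; rw [Subsingleton.elim x 0]; simp
    have h0 : K.comp (Ring.inverse (CFC.sqrt (1 - (adjoint K).comp K))) = 0 := by
      rw [hK0]; ext x; simp
    simp [h0, hK0]
  set A := (adjoint K).comp K with hAdef
  have hA0 : 0 ≤ A := by
    rw [ContinuousLinearMap.nonneg_iff_isPositive]
    simpa [ContinuousLinearMap.one_def, ContinuousLinearMap.id_comp] using (ContinuousLinearMap.isPositive_one (E := H₁)).adjoint_conj K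
  have hAsa : IsSelfAdjoint A := .of_nonneg hA0
  have hnormA : ‖A‖ = ‖K‖ ^ 2 := (norm_adjoint_comp_self K).trans (sq ‖K‖).symm
  have hK2 : ‖K‖ ^ 2 < 1 := by nlinarith [norm_nonneg K]
  have hspec : ∀ x ∈ spectrum ℝ A, 0 ≤ x ∧ x ≤ ‖K‖ ^ 2 := by
    intro x hx
    refine ⟨spectrum_nonneg_of_nonneg hA0 hx, ?_⟩
    have h1 := spectrum.norm_le_norm_of_mem hx
    rw [Real.norm_eq_abs, hnormA] at h1
    exact (abs_le.mp h1).2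
  set f := fun t : ℝ => Real.sqrt (1 - t) with hfdef
  set g := fun t : ℝ => (Real.sqrt (1 - t))⁻¹ with hgdef
  have hpos : ∀ x ∈ spectrum ℝ A, 0 < 1 - x := fun x hx => by
    have := (hspec x hx).2; linarith
  have hfc : ContinuousOn f (spectrum ℝ A) :=
    (Real.continuous_sqrt.comp (continuous_const.sub continuous_id)).continuousOn
  have hfne : ∀ x ∈ spectrum ℝ A, f x ≠ 0 := fun x hx =>
    (Real.sqrt_pos.mpr (hpos x hx)).ne'
  have hgc : ContinuousOn g (spectrum ℝ A) := hfc.inv₀ hfne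
  have hf0 : 0 ≤ cfc f A := cfc_nonneg fun x _ => Real.sqrt_nonneg _
  have hg0 : 0 ≤ cfc g A := cfc_nonneg fun x _ => by positivity
  have hS : CFC.sqrt (1 - A) = cfc f A := by
    apply CFC.sqrt_unique (hb := hf0)
    rw [← cfc_mul f f A hfc hfc]
    have : cfc (fun x => f x * f x) A = cfc (fun x : ℝ => 1 - x) A := by
      apply cfc_congr
      intro x hx
      exact Real.mul_self_sqrt (hpos x hx).le
    rw [this, cfc_sub (fun _ : ℝ => 1) (fun x : ℝ => x) A, cfc_const_one ℝ A, cfc_id' ℝ A]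
  set C := cfc g A with hCdef
  have hSC : cfc f A * C = 1 := by
    rw [hCdef, ← cfc_mul f g A hfc hgc]
    have : cfc (fun x => f x * g x) A = cfc (fun _ : ℝ => (1 : ℝ)) A :=
      cfc_congr fun x hx => mul_inv_cancel₀ (hfne x hx)
    rw [this, cfc_const_one ℝ A]
  have hCS : C * cfc f A = 1 := by
    rw [hCdef, ← cfc_mul g f A hgc hfc]
    have : cfc (fun x => g x * f x) A = cfc (fun _ : ℝ => (1 : ℝ)) A :=
      cfc_congr fun x hx => inv_mul_cancel₀ (hfne x hx)
    rw [this, cfc_const_one ℝ A]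
  have hunit : IsUnit (cfc f A) := ⟨⟨cfc f A, C, hSC, hCS⟩, rfl⟩
  have hinv : Ring.inverse (CFC.sqrt (1 - A)) = C := by
    rw [hS]
    calc Ring.inverse (cfc f A) = Ring.inverse (cfc f A) * (cfc f A * C) := by
          rw [hSC, mul_one]
      _ = (Ring.inverse (cfc f A) * cfc f A) * C := by rw [mul_assoc]
      _ = C := by rw [Ring.inverse_mul_cancel _ hunit, one_mul]
  rw [hinv]
  -- selfadjointness of C and the key product identity
  have hCsa : IsSelfAdjoint C := .of_nonneg hg0
  have hXX : adjoint (K.comp C) ∘L (K.comp C) = C * A * C := by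
    rw [ContinuousLinearMap.adjoint_comp, hCsa.adjoint_eq]
    rfl
  have hprod : C * A * C = cfc (fun t : ℝ => t / (1 - t)) A := by
    have hAid : A = cfc (fun t : ℝ => t) A := (cfc_id' ℝ A).symm
    have hidc : ContinuousOn (fun t : ℝ => t) (spectrum ℝ A) := continuousOn_id
    conv_lhs => rw [hAid]
    rw [← cfc_mul g (fun t : ℝ => t) A hgc hidc,
      ← cfc_mul (fun x => g x * x) g A (hgc.mul hidc) hgc]
    apply cfc_congr
    intro x hx
    have h1 : Real.sqrt (1 - x) * Real.sqrt (1 - x) = 1 - x :=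
      Real.mul_self_sqrt (hpos x hx).le
    field_simp [hgdef]
    rw [hgdef]; simp only [inv_pow, Real.sq_sqrt (hpos x hx).le]; ring
  have hnt' : Nontrivial (H₀ →L[ℂ] H₀) := ⟨1, 0, one_ne_zero⟩
  have hhc : ContinuousOn (fun t : ℝ => t / (1 - t)) (spectrum ℝ A) := by
    apply ContinuousOn.div continuousOn_id (continuous_const.sub continuous_id).continuousOn
    intro x hx; exact (hpos x hx).ne'
  have hgr := IsGreatest.norm_cfc (𝕜 := ℝ) (fun t : ℝ => t / (1 - t)) A hhc hAsa
  have hnval : ‖cfc (fun t : ℝ => t / (1 - t)) A‖ = ‖K‖ ^ 2 / (1 - ‖K‖ ^ 2) := by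
    apply le_antisymm
    · obtain ⟨x, hx, hxe⟩ := hgr.1
      rw [← hxe]
      simp only []
      rw [Real.norm_eq_abs, abs_of_nonneg (div_nonneg (hspec x hx).1 (hpos x hx).le)]
      rw [div_le_div_iff₀ (hpos x hx) (by linarith)]
      nlinarith [(hspec x hx).1, (hspec x hx).2]
    · have hmem : ‖A‖ ∈ spectrum ℝ A := CStarAlgebra.norm_mem_spectrum_of_nonneg hA0
      have h2 := hgr.2 ⟨‖A‖, hmem, rfl⟩
      simp only [Real.norm_eq_abs] at h2
      rw [abs_of_nonneg (div_nonneg (by positivity) (by linarith))] at h2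
      rwa [hnormA] at h2
  have hsq : ‖K.comp C‖ * ‖K.comp C‖ = ‖K‖ ^ 2 / (1 - ‖K‖ ^ 2) := by
    rw [← norm_adjoint_comp_self (K.comp C), hXX, hprod, hnval]
  rw [show ‖K.comp C‖ = Real.sqrt (‖K‖ ^ 2 / (1 - ‖K‖ ^ 2)) from by
    rw [← hsq, Real.sqrt_mul_self (norm_nonneg _)]]
  rw [Real.sqrt_div (by positivity), Real.sqrt_sq (norm_nonneg K)]
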